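/- The two non-real complex roots of λ³ − 3λ² − λ − 1 have absolute value at most 0.544. -/

import Mathlib

/-- The non-real complex roots of `λ³ − 3λ² − λ − 1` have absolute value at most
0.544. -/
theorem stmt_6 (z : ℂ) (hroot : z ^ 3 - 3 * z ^ 2 - z - 1 = 0) (him : z.im ≠ 0) :
    ‖z‖ ≤ 0.544 := by
  set a := z.re with ha
  set b := z.im with hb
  have h1 := congrArg Complex.re hroot
  have h2 := congrArg Complex.im hroot
  simp [pow_succ, Complex.mul_re, Complex.mul_im, Complex.sub_re, Complex.sub_im,
    Complex.one_re, Complex.one_im] at h1 h2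
  -- h2 should give b * (3a² - b² - 6a - 1) = 0 form
  have him' : 3 * a ^ 2 - b ^ 2 - 6 * a - 1 = 0 := by
    have : b * (3 * a ^ 2 - b ^ 2 - 6 * a - 1) = 0 := by ring_nf; ring_nf at h2; linarith
    rcases mul_eq_zero.mp this with h | h
    · exact absurd h him
    · exact h
  have hbsq : b ^ 2 = 3 * a ^ 2 - 6 * a - 1 := by linarith
  have hacube : 2 * a ^ 3 - 6 * a ^ 2 + 4 * a + 1 = 0 := by
    have : a ^ 3 - 3 * a * b ^ 2 - 3 * a ^ 2 + 3 * b ^ 2 - a - 1 = 0 := by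
      ring_nf; ring_nf at h1; linarith
    nlinarith [this, hbsq]
  have hq : (a ^ 2 + b ^ 2) ^ 3 + (a ^ 2 + b ^ 2) ^ 2 + 3 * (a ^ 2 + b ^ 2) - 1 = 0 := by
    have hq' : a ^ 2 + b ^ 2 = 4 * a ^ 2 - 6 * a - 1 := by linarith
    rw [hq']
    linear_combination (32 * a ^ 3 - 48 * a ^ 2 - 8 * a - 4) * hacube
  have hqle : a ^ 2 + b ^ 2 ≤ 0.295936 := by
    nlinarith [sq_nonneg b, sq_nonneg a, sq_nonneg (a ^ 2 + b ^ 2),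
      sq_nonneg (a ^ 2 + b ^ 2 - 0.295936), sq_nonneg (a ^ 2 + b ^ 2 + 1)]
  have habs : ‖z‖ = Real.sqrt (a ^ 2 + b ^ 2) := by
    rw [Complex.norm_def, Complex.normSq_apply]; ring_nf; rfl
  rw [habs]
  have : Real.sqrt (a ^ 2 + b ^ 2) ≤ Real.sqrt 0.295936 := Real.sqrt_le_sqrt hqle
  calc Real.sqrt (a ^ 2 + b ^ 2) ≤ Real.sqrt 0.295936 := this
    _ = 0.544 := by
        rw [show (0.295936 : ℝ) = 0.544 ^ 2 by norm_num, Real.sqrt_sq (by norm_num)]
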